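/- Let φ : ℝⁿ → ℝ be L-Lipschitz continuous and ρ-weakly convex (i.e., φ + (ρ/2)‖·‖² is convex), and let M ⊂ ℝⁿ be an embedded submanifold with geodesic curvature bounded by κ_g. Fix X ∈ M and let g_X ∈ ∂_R φ(X) := P_{T_X M}(∂φ(X)) be a Riemannian subgradient. Then for all Y ∈ M with d_M(X,Y) ≤ (2-√2)/κ_g: φ(Y) ≥ φ(X) + ⟨g_X, Y - X⟩ - ((ρ + 2κ_g L)/2)‖Y - X‖². -/

import Mathlib

local notation "⟪" x ", " y "⟫_ℝ" => @inner ℝ _ _ x y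

set_option maxHeartbeats 1000000 in
/-- Riemannian subgradient inequality for weakly convex
functions: let `φ : ℝⁿ → ℝ` be `L`-Lipschitz and `ρ`-weakly convex, `M ⊂ ℝⁿ`
an embedded submanifold with tangent space `T` at `X ∈ M` and geodesic
curvature bounded by `κ_g` (expressed through the normal vector inequality for
the normal component `G - g_X` on the geodesic ball of radius `(2-√2)/κ_g`).
If `G ∈ ∂φ(X)` (Euclidean subgradient of the weakly convex function) and
`g_X = P_{T_X M}(G) ∈ ∂_R φ(X)`, then for all `Y ∈ M` with
`d_M(X,Y) ≤ (2-√2)/κ_g`: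
`φ(Y) ≥ φ(X) + ⟪g_X, Y - X⟫ - ((ρ + 2κ_g L)/2)‖Y - X‖²`. -/
theorem riemannian_subgradient_inequality
    {n : ℕ} (M : Set (EuclideanSpace ℝ (Fin n)))
    (κg L ρ : ℝ) (hκ : 0 < κg) (hL : 0 ≤ L) (hρ : 0 ≤ ρ)
    (φ : EuclideanSpace ℝ (Fin n) → ℝ)
    (hlip : ∀ a b, |φ a - φ b| ≤ L * ‖a - b‖)
    (hwc : ConvexOn ℝ Set.univ (fun x => φ x + ρ / 2 * ‖x‖ ^ 2))
    (X : EuclideanSpace ℝ (Fin n)) (hX : X ∈ M)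
    (T : Submodule ℝ (EuclideanSpace ℝ (Fin n)))  -- tangent space `T_X M`
    (dM : EuclideanSpace ℝ (Fin n) → EuclideanSpace ℝ (Fin n) → ℝ)
    (G : EuclideanSpace ℝ (Fin n))
    -- `G` is a Euclidean subgradient of `φ` at `X`
    (hG : ∀ y, φ y + ρ / 2 * ‖y‖ ^ 2 ≥
      φ X + ρ / 2 * ‖X‖ ^ 2 + ⟪G + ρ • X, y - X⟫_ℝ)
    (gX : EuclideanSpace ℝ (Fin n))
    (hgX : gX = (T.orthogonalProjection G : EuclideanSpace ℝ (Fin n)))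
    -- normal vector inequality for the normal component `G - gX`
    (hnormal : ∀ Y ∈ M, dM X Y ≤ (2 - Real.sqrt 2) / κg →
      -(κg * ‖G - gX‖ * ‖Y - X‖ ^ 2) ≤ ⟪G - gX, Y - X⟫_ℝ) :
    ∀ Y ∈ M, dM X Y ≤ (2 - Real.sqrt 2) / κg →
      φ Y ≥ φ X + ⟪gX, Y - X⟫_ℝ - (ρ + 2 * κg * L) / 2 * ‖Y - X‖ ^ 2 := by
  intro Y hY hd
  set w : EuclideanSpace ℝ (Fin n) := G - gX with hw
  -- orthogonality : ⟪gX, w⟫ = 0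
  have hwT : w ∈ Tᗮ := by
    rw [hw, hgX]; exact T.sub_starProjection_mem_orthogonal G
  have hperp : ⟪gX, w⟫_ℝ = 0 :=
    Submodule.inner_right_of_mem_orthogonal
      (by rw [hgX]; exact (T.orthogonalProjection G).2) hwT
  have hGw : ⟪G, w⟫_ℝ = ‖w‖ ^ 2 := by
    have hG' : G = gX + w := by rw [hw]; abel
    rw [hG', inner_add_left, hperp, real_inner_self_eq_norm_sq]; ring
  -- bound : ‖w‖ ≤ L
  have hkey : ∀ t : ℝ, 0 < t → ‖w‖ ^ 2 ≤ L * ‖w‖ + ρ * t / 2 * ‖w‖ ^ 2 := by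
    intro t ht
    have h1 := hG (X + t • w)
    have h2 : φ (X + t • w) - φ X ≤ L * (t * ‖w‖) := by
      have := hlip (X + t • w) X
      have hns : ‖X + t • w - X‖ = t * ‖w‖ := by
        simp [norm_smul, abs_of_pos ht]
      rw [hns] at this
      exact (abs_le.mp this).2
    have hinner : ⟪G + ρ • X, X + t • w - X⟫_ℝ
        = t * ‖w‖ ^ 2 + t * ρ * ⟪X, w⟫_ℝ := by
      have : X + t • w - X = t • w := by abel
      rw [this, inner_add_left, real_inner_smul_left, real_inner_smul_right,
        real_inner_smul_right, hGw]
      ring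
    have hnorm : ‖X + t • w‖ ^ 2 = ‖X‖ ^ 2 + 2 * t * ⟪X, w⟫_ℝ + t ^ 2 * ‖w‖ ^ 2 := by
      rw [norm_add_sq_real, real_inner_smul_right, norm_smul]
      rw [Real.norm_eq_abs, abs_of_pos ht]
      ring
    rw [hinner, hnorm] at h1
    have := h1
    nlinarith [sq_nonneg t]
  have hwL : ‖w‖ ≤ L := by
    rcases eq_or_lt_of_le (norm_nonneg w) with h0 | h0
    · rw [← h0]; exact hL
    have hsq : ‖w‖ ^ 2 ≤ L * ‖w‖ := by
      apply le_of_forall_pos_le_add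
      intro ε hε
      have ht : 0 < 2 * ε / (ρ * ‖w‖ ^ 2 + 1) := by positivity
      have := hkey _ ht
      have hle : ρ * (2 * ε / (ρ * ‖w‖ ^ 2 + 1)) / 2 * ‖w‖ ^ 2 ≤ ε := by
        have hD : (0:ℝ) < ρ * ‖w‖ ^ 2 + 1 := by positivity
        have heq : ρ * (2 * ε / (ρ * ‖w‖ ^ 2 + 1)) / 2 * ‖w‖ ^ 2
            = ε * ((ρ * ‖w‖ ^ 2) / (ρ * ‖w‖ ^ 2 + 1)) := by
          field_simp
        rw [heq]
        have hle1 : (ρ * ‖w‖ ^ 2) / (ρ * ‖w‖ ^ 2 + 1) ≤ 1 := by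
          rw [div_le_one hD]; linarith
        nlinarith
      linarith
    nlinarith
  -- main inequality
  have h1 := hG Y
  have hinner : ⟪G + ρ • X, Y - X⟫_ℝ
      = ⟪gX, Y - X⟫_ℝ + ⟪w, Y - X⟫_ℝ + ρ * ⟪X, Y - X⟫_ℝ := by
    have hG' : G = gX + w := by rw [hw]; abel
    rw [inner_add_left, hG', inner_add_left, real_inner_smul_left]
    try ring
  have hnorm : ‖Y‖ ^ 2 = ‖X‖ ^ 2 + 2 * ⟪X, Y - X⟫_ℝ + ‖Y - X‖ ^ 2 := by
    have h : Y = X + (Y - X) := by abel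
    calc ‖Y‖ ^ 2 = ‖X + (Y - X)‖ ^ 2 := by rw [← h]
    _ = ‖X‖ ^ 2 + 2 * ⟪X, Y - X⟫_ℝ + ‖Y - X‖ ^ 2 := by
        rw [norm_add_sq_real]; try ring
  have hn := hnormal Y hY hd
  have hwb : κg * ‖w‖ * ‖Y - X‖ ^ 2 ≤ κg * L * ‖Y - X‖ ^ 2 := by
    have : κg * ‖w‖ ≤ κg * L := by nlinarith
    nlinarith [sq_nonneg ‖Y - X‖]
  rw [hinner, hnorm] at h1
  nlinarith
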